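/- Any polynomial π(u) ∈ C(q)[u] with constant term 1 which splits over C(q) can be written uniquely (up to order subject to the stated normalization) as a product π(u) = Π_{j=1}^{s} π_{m_j, a_j}(u), where m_j ∈ Z_+, a_j ∈ C(q)^×, and for j < ℓ one has a_j/a_ℓ ≠ q^{±(m_j + m_ℓ − 2p)} for all 0 ≤ p < min(m_j, m_ℓ). -/

import Mathlib

/- STATEMENT 4: Every split polynomial `π ∈ ℂ(q)[u]` with constant term 1 factors uniquely
(up to order) as a product of `q`-strings `π_{m_j,a_j}` in normal form:
`j < ℓ → a_j/a_ℓ ≠ q^{±(m_j+m_ℓ−2p)}` for `0 ≤ p < min(m_j, m_ℓ)`. -/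

noncomputable section

open Polynomial

abbrev Kq : Type := RatFunc ℂ

noncomputable def qvar : Kq := RatFunc.X

/-- The `q`-string polynomial `π_{m,a}(u) = Π_{r=1}^m (1 − a q^{m−2r+1} u)`. -/
noncomputable def qstring (a : Kq) (m : ℕ) : Polynomial Kq :=
  ∏ r ∈ Finset.Icc 1 m, (1 - C (a * qvar ^ ((m : ℤ) - 2 * (r : ℤ) + 1)) * X)

/-- The normal form condition on the data `(m_j, a_j)_{j < s}`. -/
def NormalForm (s : ℕ) (m : Fin s → ℕ) (a : Fin s → Kq) : Prop :=
  (∀ j, 1 ≤ m j) ∧ (∀ j, a j ≠ 0) ∧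
  ∀ j l : Fin s, j < l → ∀ p : ℕ, p < min (m j) (m l) →
    a j / a l ≠ qvar ^ ((m j : ℤ) + (m l : ℤ) - 2 * p) ∧
    a j / a l ≠ qvar ^ (-((m j : ℤ) + (m l : ℤ) - 2 * p))

namespace Stmt4Aux

attribute [local instance] Classical.propDecidable

lemma q_ne_zero : qvar ≠ 0 := RatFunc.X_ne_zero

lemma q_pow_ne_one {k : ℕ} (hk : 0 < k) : (qvar : Kq) ^ k ≠ 1 := by
  intro h
  have h2 : (algebraMap (Polynomial ℂ) Kq) (Polynomial.X ^ k) =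
      (algebraMap (Polynomial ℂ) Kq) 1 := by
    simpa [map_pow, RatFunc.algebraMap_X, qvar] using h
  have hx : (Polynomial.X : Polynomial ℂ) ^ k = 1 := RatFunc.algebraMap_injective ℂ h2
  have := congrArg Polynomial.natDegree hx
  simp [Polynomial.natDegree_X_pow] at this
  omega

lemma q_zpow_eq_one {n : ℤ} (h : (qvar : Kq) ^ n = 1) : n = 0 := by
  obtain ⟨k, rfl | rfl⟩ := Int.eq_nat_or_neg n
  · rw [zpow_natCast] at h
    rcases Nat.eq_zero_or_pos k with hk | hk
    · simp [hk]
    · exact absurd h (q_pow_ne_one hk)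
  · rw [zpow_neg, inv_eq_one, zpow_natCast] at h
    rcases Nat.eq_zero_or_pos k with hk | hk
    · simp [hk]
    · exact absurd h (q_pow_ne_one hk)

lemma q_zpow_inj : Function.Injective fun n : ℤ => (qvar : Kq) ^ n := by
  intro a b h
  simp only at h
  have : (qvar : Kq) ^ (a - b) = 1 := by
    rw [zpow_sub₀ q_ne_zero, h, div_self (zpow_ne_zero _ q_ne_zero)]
  have := q_zpow_eq_one this
  omega

/-! ### Integer interval combinatorics -/

def GoodZ (l : ℤ) (m : ℕ) (l' : ℤ) (m' : ℕ) : Prop :=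
  (l' ≤ l ∧ l + m ≤ l' + m') ∨ (l ≤ l' ∧ l' + m' ≤ l + m) ∨ (l + m + 1 ≤ l') ∨ (l' + m' + 1 ≤ l)

lemma not_goodZ_iff {m m' : ℕ} (hm : 1 ≤ m) (hm' : 1 ≤ m') (k : ℤ) :
    ¬ GoodZ 0 m k m' ↔
      ∃ p : ℕ, p < min m m' ∧ ((k:ℤ) = (p:ℤ) - m' ∨ (k:ℤ) = (m:ℤ) - p) := by
  unfold GoodZ
  constructor
  · intro h
    by_cases hk : k ≤ 0
    · exact ⟨(k + m').toNat, by omega, by omega⟩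
    · exact ⟨((m:ℤ) - k).toNat, by omega, by omega⟩
  · rintro ⟨p, hp, hpe⟩ hg
    omega

def intv (l : ℤ) (m : ℕ) : Multiset ℤ := (Multiset.range m).map fun i : ℕ => l + (i:ℤ)

lemma mem_intv {y l : ℤ} {m : ℕ} : y ∈ intv l m ↔ l ≤ y ∧ y < l + m := by
  simp only [intv, Multiset.mem_map, Multiset.mem_range]
  constructor
  · rintro ⟨i, hi, rfl⟩; omega
  · intro h; exact ⟨(y - l).toNat, by omega, by omega⟩

lemma intv_nodup (l : ℤ) (m : ℕ) : (intv l m).Nodup :=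
  (Multiset.nodup_range m).map (fun a b h => by omega)

lemma card_intv (l : ℤ) (m : ℕ) : (intv l m).card = m := by simp [intv]

/-! ### Multiset pairwise helpers -/

section PW
variable {α : Type*} {R : α → α → Prop}

lemma pw_zero : (0 : Multiset α).Pairwise R := ⟨[], rfl, List.Pairwise.nil⟩

lemma pw_cons (hR : Symmetric R) {a : α} {s : Multiset α} :
    (a ::ₘ s).Pairwise R ↔ (∀ b ∈ s, R a b) ∧ s.Pairwise R := by
  induction s using Quotient.inductionOn with
  | _ L =>
    haveI : Std.Symm R := ⟨fun _ _ h => hR h⟩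
    rw [show ((⟦L⟧ : Multiset α)) = (L : Multiset α) from rfl, Multiset.cons_coe,
      Multiset.pairwise_coe_iff_pairwise, Multiset.pairwise_coe_iff_pairwise,
      List.pairwise_cons]
    simp [Multiset.mem_coe]

lemma pw_add (hR : Symmetric R) {s t : Multiset α} :
    (s + t).Pairwise R ↔ s.Pairwise R ∧ t.Pairwise R ∧ ∀ a ∈ s, ∀ b ∈ t, R a b := by
  induction s using Quotient.inductionOn with
  | _ L =>
    induction t using Quotient.inductionOn with
    | _ M =>
      haveI : Std.Symm R := ⟨fun _ _ h => hR h⟩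
      rw [show ((⟦L⟧ : Multiset α)) = (L : Multiset α) from rfl,
        show ((⟦M⟧ : Multiset α)) = (M : Multiset α) from rfl, Multiset.coe_add,
        Multiset.pairwise_coe_iff_pairwise, Multiset.pairwise_coe_iff_pairwise,
        Multiset.pairwise_coe_iff_pairwise, List.pairwise_append]
      simp [Multiset.mem_coe]

lemma pw_mono (hR : Symmetric R) {s t : Multiset α} (hle : s ≤ t) (h : t.Pairwise R) :
    s.Pairwise R := by
  obtain ⟨u, rfl⟩ := Multiset.le_iff_exists_add.mp hle
  exact ((pw_add hR).mp h).1

lemma pw_map {β : Type*} {S : β → β → Prop} {f : α → β} (hR : Symmetric R) {s : Multiset α}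
    (h : s.Pairwise R) (him : ∀ a ∈ s, ∀ b ∈ s, R a b → S (f a) (f b)) :
    (s.map f).Pairwise S := by
  induction s using Quotient.inductionOn with
  | _ L =>
    obtain ⟨L', hL', hpw⟩ := h
    have hperm : L.Perm L' := Multiset.coe_eq_coe.mp hL'
    have hpwL : L.Pairwise R := (hperm.pairwise_iff fun h => hR h).mpr hpw
    refine ⟨L.map f, by simp [Multiset.map_coe], ?_⟩
    rw [List.pairwise_map]
    exact hpwL.imp_of_mem fun ha hb hr => him _ (Multiset.mem_coe.mpr ha) _ (Multiset.mem_coe.mpr hb) hr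

lemma pw_forall (hR : Symmetric R) {s : Multiset α} (h : s.Pairwise R) {a b : α}
    (ha : a ∈ s) (hb : b ∈ s) (hab : a ≠ b) : R a b := by
  obtain ⟨L, hL, hpw⟩ := h
  subst hL
  exact (haveI : Std.Symm R := ⟨fun _ _ h => hR h⟩; hpw.forall (Multiset.mem_coe.mp ha) (Multiset.mem_coe.mp hb) hab)

end PW

lemma mem_msum {α β : Type*} {g : β → Multiset α} {D : Multiset β} {x : α}
    (hx : x ∈ (D.map g).sum) : ∃ P ∈ D, x ∈ g P := by
  induction D using Multiset.induction_on with
  | empty => simp at hx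
  | cons a s ih =>
    rw [Multiset.map_cons, Multiset.sum_cons, Multiset.mem_add] at hx
    rcases hx with hx | hx
    · exact ⟨a, Multiset.mem_cons_self a s, hx⟩
    · obtain ⟨P, hP, hxP⟩ := ih hx
      exact ⟨P, Multiset.mem_cons_of_mem hP, hxP⟩

lemma le_msum {α β : Type*} {g : β → Multiset α} {D : Multiset β} {P : β} (h : P ∈ D) :
    g P ≤ (D.map g).sum :=
  Multiset.single_le_sum (fun x _ => Multiset.zero_le x) _ (Multiset.mem_map_of_mem g h)

def GdZ (P P' : ℤ × ℕ) : Prop := GoodZ P.1 P.2 P'.1 P'.2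

lemma GdZ_symm : Symmetric GdZ := by
  intro P P' h
  unfold GdZ GoodZ at *
  omega

def OkZ (D : Multiset (ℤ × ℕ)) (f : Multiset ℤ) : Prop :=
  (∀ P ∈ D, 1 ≤ P.2) ∧ D.Pairwise GdZ ∧ (D.map fun P => intv P.1 P.2).sum = f

lemma exists_component {f : Multiset ℤ} (hf : f ≠ 0) :
    ∃ x : ℤ, ∃ m : ℕ, 1 ≤ m ∧ (∀ y ∈ f, x ≤ y) ∧ (∀ i : ℕ, i < m → x + i ∈ f) ∧ x + m ∉ f := by
  have hne : f.toFinset.Nonempty := by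
    obtain ⟨a, ha⟩ := Multiset.exists_mem_of_ne_zero hf
    exact ⟨a, Multiset.mem_toFinset.mpr ha⟩
  set x := f.toFinset.min' hne with hx
  have hxmin : ∀ y ∈ f, x ≤ y := fun y hy =>
    Finset.min'_le _ _ (Multiset.mem_toFinset.mpr hy)
  have hxmem : x ∈ f := Multiset.mem_toFinset.mp (f.toFinset.min'_mem hne)
  have hex : ∃ k : ℕ, x + ((k:ℤ)+1) ∉ f := by
    by_contra hco
    push_neg at hco
    set M := f.toFinset.max' hne with hM
    have hMmax : ∀ y ∈ f, y ≤ M := fun y hy =>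
      Finset.le_max' _ _ (Multiset.mem_toFinset.mpr hy)
    have h1 := hco (M - x).toNat
    have h2 := hMmax _ h1
    have h3 := hxmin _ hxmem
    have hxM := hMmax _ hxmem
    omega
  set m := Nat.find hex + 1 with hm
  refine ⟨x, m, by omega, hxmin, ?_, ?_⟩
  · intro i hi
    rcases Nat.eq_zero_or_pos i with rfl | hipos
    · simpa using hxmem
    · have : ¬ (x + ((i - 1 : ℕ) + 1 : ℤ) ∉ f) := Nat.find_min hex (by omega)
      push_neg at this
      have heq : x + ((i - 1 : ℕ) + 1 : ℤ) = x + i := by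
        have : ((i - 1 : ℕ) : ℤ) = (i : ℤ) - 1 := by omega
        omega
      rwa [heq] at this
  · have := Nat.find_spec hex
    have heq : x + ((Nat.find hex : ℤ) + 1) = x + (m : ℤ) := by
      rw [hm]; push_cast; ring
    rwa [heq] at this

theorem okZ_exists (f : Multiset ℤ) : ∃ D, OkZ D f := by
  induction f using Multiset.strongInductionOn with
  | _ f ih =>
    rcases eq_or_ne f 0 with rfl | hf
    · exact ⟨0, by simp [OkZ], pw_zero, by simp⟩
    obtain ⟨x, m, hm, hxmin, hfull, hnotmem⟩ := exists_component hf
    have hIle : intv x m ≤ f := by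
      rw [Multiset.le_iff_subset (intv_nodup x m)]
      intro y hy
      rw [mem_intv] at hy
      have : y = x + ((y - x).toNat : ℤ) := by omega
      rw [this]
      exact hfull _ (by omega)
    obtain ⟨f', rfl⟩ := Multiset.le_iff_exists_add.mp hIle
    have hcard : f' < intv x m + f' := by
      have : intv x m ≠ 0 := by
        intro h0
        have := card_intv x m
        rw [h0] at this
        simp at this
        omega
      exact lt_add_of_pos_left f' (Multiset.lt_iff_cons_le.mpr
        (by
          obtain ⟨a, ha⟩ := Multiset.exists_mem_of_ne_zero this
          exact ⟨a, Multiset.singleton_le.mpr ha⟩))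
    obtain ⟨D', h1, h2, h3⟩ := ih f' hcard
    refine ⟨(x, m) ::ₘ D', ?_, ?_, ?_⟩
    · intro P hP
      rcases Multiset.mem_cons.mp hP with rfl | hP
      · exact hm
      · exact h1 P hP
    · rw [pw_cons GdZ_symm]
      refine ⟨?_, h2⟩
      intro J hJ
      have hJle : intv J.1 J.2 ≤ f' := h3 ▸ le_msum hJ
      have hJm : 1 ≤ J.2 := h1 J hJ
      have hbot : J.1 ∈ f' := Multiset.mem_of_le hJle (mem_intv.mpr ⟨le_refl _, by omega⟩)
      have hbotf : J.1 ∈ intv x m + f' := Multiset.mem_add.mpr (Or.inr hbot)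
      have hxle : x ≤ J.1 := hxmin _ hbotf
      unfold GdZ GoodZ
      by_cases hsep : x + (m:ℤ) + 1 ≤ J.1
      · exact Or.inr (Or.inr (Or.inl hsep))
      · have hne : J.1 ≠ x + m := fun h => hnotmem (h ▸ hbotf)
        have htop : J.1 + (J.2:ℤ) ≤ x + m := by
          by_contra htop
          push_neg at htop
          have hmem : (x + (m:ℤ)) ∈ intv J.1 J.2 := mem_intv.mpr ⟨by omega, by omega⟩
          exact hnotmem (Multiset.mem_add.mpr (Or.inr (Multiset.mem_of_le hJle hmem)))
        exact Or.inr (Or.inl ⟨hxle, htop⟩)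
    · rw [Multiset.map_cons, Multiset.sum_cons, h3]

lemma okZ_key {D : Multiset (ℤ × ℕ)} {f : Multiset ℤ} (hD : OkZ D f)
    {x : ℤ} {m : ℕ} (hm : 1 ≤ m) (hxmin : ∀ y ∈ f, x ≤ y)
    (hfull : ∀ i : ℕ, i < m → x + i ∈ f) (hnot : x + m ∉ f) : (x, m) ∈ D := by
  obtain ⟨h1, h2, h3⟩ := hD
  have hx0 : x ∈ f := by simpa using hfull 0 (by omega)
  obtain ⟨J₀', hJ₀', hxJ₀'⟩ := mem_msum (g := fun P : ℤ × ℕ => intv P.1 P.2) (h3 ▸ hx0)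
  have hbase : ∀ J ∈ D, (x ∈ intv J.1 J.2) → J.1 = x := by
    intro J hJ hxJ
    have h := (mem_intv.mp hxJ).1
    have hb : J.1 ∈ f := h3 ▸ Multiset.mem_of_le (le_msum hJ)
      (mem_intv.mpr ⟨le_refl _, by have := h1 J hJ; omega⟩)
    have := hxmin _ hb
    omega
  set T := D.toFinset.filter (fun J => J.1 = x) with hT
  have hTne : T.Nonempty :=
    ⟨J₀', Finset.mem_filter.mpr ⟨Multiset.mem_toFinset.mpr hJ₀', hbase _ hJ₀' hxJ₀'⟩⟩
  obtain ⟨J₀, hJ₀T, hJ₀max⟩ := T.exists_max_image Prod.snd hTne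
  obtain ⟨hJ₀D, hJ₀x⟩ := Finset.mem_filter.mp hJ₀T
  have hJ₀D : J₀ ∈ D := Multiset.mem_toFinset.mp hJ₀D
  set m₀ := J₀.2 with hm₀
  have hm₀1 : 1 ≤ m₀ := h1 _ hJ₀D
  have hle1 : m₀ ≤ m := by
    by_contra hgt
    push_neg at hgt
    have hmem : x + (m:ℤ) ∈ intv J₀.1 J₀.2 := mem_intv.mpr ⟨by omega, by omega⟩
    exact hnot (h3 ▸ Multiset.mem_of_le (le_msum hJ₀D) hmem)
  have hge : m ≤ m₀ := by
    by_contra hlt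
    push_neg at hlt
    have hmem : x + (m₀:ℤ) ∈ f := hfull m₀ hlt
    obtain ⟨J₁, hJ₁D, hxJ₁⟩ := mem_msum (g := fun P : ℤ × ℕ => intv P.1 P.2) (h3 ▸ hmem)
    have hJ₁m : 1 ≤ J₁.2 := h1 _ hJ₁D
    have hb := mem_intv.mp hxJ₁
    have hJ₁x : x ≤ J₁.1 := by
      have hmf : J₁.1 ∈ f := h3 ▸ Multiset.mem_of_le (le_msum hJ₁D)
        (mem_intv.mpr ⟨le_refl _, by omega⟩)
      exact hxmin _ hmf
    have hJ₁nex : J₁.1 ≠ x := by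
      intro hx1
      have hmemT : J₁ ∈ T := Finset.mem_filter.mpr ⟨Multiset.mem_toFinset.mpr hJ₁D, hx1⟩
      have := hJ₀max _ hmemT
      omega
    have hne : J₀ ≠ J₁ := by
      intro h
      rw [← h] at hb
      omega
    have hgood := pw_forall GdZ_symm h2 hJ₀D hJ₁D hne
    unfold GdZ GoodZ at hgood
    omega
  have hJeq : J₀ = (x, m) := by
    have : J₀.2 = m := by omega
    rw [← hJ₀x, ← this]
  exact hJeq ▸ hJ₀D

theorem okZ_unique {f : Multiset ℤ} : ∀ {D D' : Multiset (ℤ × ℕ)}, OkZ D f → OkZ D' f → D = D' := by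
  induction f using Multiset.strongInductionOn with
  | _ f ih =>
    intro D D' hD hD'
    rcases eq_or_ne f 0 with rfl | hf
    · have hz : ∀ {E : Multiset (ℤ × ℕ)}, OkZ E 0 → E = 0 := by
        intro E hE
        by_contra hne
        obtain ⟨J, hJ⟩ := Multiset.exists_mem_of_ne_zero hne
        have hle : intv J.1 J.2 ≤ 0 := hE.2.2 ▸ le_msum (g := fun P : ℤ × ℕ => intv P.1 P.2) hJ
        have hmm : J.1 ∈ (0 : Multiset ℤ) := Multiset.mem_of_le hle
          (mem_intv.mpr ⟨le_refl _, by have := hE.1 J hJ; omega⟩)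
        simp at hmm
      rw [hz hD, hz hD']
    · obtain ⟨x, m, hm, hxmin, hfull, hnot⟩ := exists_component hf
      have hmemD := okZ_key hD hm hxmin hfull hnot
      have hmemD' := okZ_key hD' hm hxmin hfull hnot
      have hpeel : ∀ {E : Multiset (ℤ × ℕ)}, OkZ E f → (x, m) ∈ E →
          OkZ (E.erase (x, m)) ((E.erase (x,m)).map (fun P => intv P.1 P.2)).sum ∧
          intv x m + ((E.erase (x,m)).map (fun P => intv P.1 P.2)).sum = f := by
        intro E hE hmem
        obtain ⟨h1, h2, h3⟩ := hE
        refine ⟨⟨fun P hP => h1 P (Multiset.mem_of_mem_erase hP),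
          pw_mono GdZ_symm (Multiset.erase_le _ _) h2, rfl⟩, ?_⟩
        rw [← h3]
        conv_rhs => rw [← Multiset.cons_erase hmem]
        rw [Multiset.map_cons, Multiset.sum_cons]
      obtain ⟨hokD, hsumD⟩ := hpeel hD hmemD
      obtain ⟨hokD', hsumD'⟩ := hpeel hD' hmemD'
      set S := ((D.erase (x,m)).map (fun P => intv P.1 P.2)).sum with hS
      have hSeq : ((D'.erase (x,m)).map (fun P => intv P.1 P.2)).sum = S := by
        have := hsumD'.trans hsumD.symm
        exact add_left_cancel this
      rw [hSeq] at hokD'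
      have hSlt : S < f := by
        rw [← hsumD]
        refine lt_add_of_pos_left _ ?_
        have hmem0 : x ∈ intv x m := mem_intv.mpr ⟨le_refl _, by omega⟩
        exact Multiset.lt_iff_cons_le.mpr ⟨x, Multiset.singleton_le.mpr hmem0⟩
      have := ih S hSlt hokD hokD'
      rw [← Multiset.cons_erase hmemD, ← Multiset.cons_erase hmemD', this]


/-! ### q-strings in Kq -/

def SameC (b c : Kq) : Prop := ∃ k : ℤ, c = b * qvar ^ (2*k)

lemma sameC_refl (b : Kq) : SameC b b := ⟨0, by simp⟩

lemma eC_mul (b₀ : Kq) (l k : ℤ) : (b₀ * qvar ^ (2*l)) * qvar ^ (2*k) = b₀ * qvar ^ (2*(l+k)) := by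
  rw [mul_assoc, ← zpow_add₀ q_ne_zero]
  congr 1
  ring

lemma sameC_symm {b c : Kq} (h : SameC b c) : SameC c b := by
  obtain ⟨k, rfl⟩ := h
  exact ⟨-k, by rw [eC_mul]; simp⟩

lemma sameC_trans {a b c : Kq} (h1 : SameC a b) (h2 : SameC b c) : SameC a c := by
  obtain ⟨k, rfl⟩ := h1
  obtain ⟨k', rfl⟩ := h2
  exact ⟨k + k', by rw [eC_mul]⟩

def strM (b : Kq) (m : ℕ) : Multiset Kq := (Multiset.range m).map fun i : ℕ => b * qvar ^ (2*(i:ℤ))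

lemma mem_strM {c b : Kq} {m : ℕ} : c ∈ strM b m ↔ ∃ i : ℕ, i < m ∧ c = b * qvar ^ (2*(i:ℤ)) := by
  simp only [strM, Multiset.mem_map, Multiset.mem_range]
  constructor
  · rintro ⟨i, hi, rfl⟩; exact ⟨i, hi, rfl⟩
  · rintro ⟨i, hi, rfl⟩; exact ⟨i, hi, rfl⟩

lemma bot_mem_strM {b : Kq} {m : ℕ} (hm : 1 ≤ m) : b ∈ strM b m :=
  mem_strM.mpr ⟨0, by omega, by simp⟩

lemma sameC_of_mem_strM {b : Kq} {m : ℕ} {c : Kq} (hc : c ∈ strM b m) : SameC b c := by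
  obtain ⟨i, _, rfl⟩ := mem_strM.mp hc
  exact ⟨i, rfl⟩

def GoodK (P P' : Kq × ℕ) : Prop := ∀ k : ℤ, P'.1 = P.1 * qvar ^ (2*k) → GoodZ 0 P.2 k P'.2

def Gd (P P' : Kq × ℕ) : Prop := GoodK P P' ∧ GoodK P' P

lemma Gd_symm : Symmetric Gd := fun _ _ h => ⟨h.2, h.1⟩

def OkK (D : Multiset (Kq × ℕ)) (B : Multiset Kq) : Prop :=
  (∀ P ∈ D, P.1 ≠ 0 ∧ 1 ≤ P.2) ∧ D.Pairwise Gd ∧ (D.map fun P => strM P.1 P.2).sum = B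

def eC (b₀ : Kq) (k : ℤ) : Kq := b₀ * qvar ^ (2*k)

lemma eC_ne_zero {b₀ : Kq} (hb : b₀ ≠ 0) (k : ℤ) : eC b₀ k ≠ 0 :=
  mul_ne_zero hb (zpow_ne_zero _ q_ne_zero)

lemma eC_inj {b₀ : Kq} (hb : b₀ ≠ 0) : Function.Injective (eC b₀) := by
  intro k k' h
  unfold eC at h
  have h2 := mul_left_cancel₀ hb h
  have h3 : (2*k : ℤ) = 2*k' := q_zpow_inj h2
  omega

def psiC (b₀ c : Kq) : ℤ := if h : SameC b₀ c then h.choose else 0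

lemma eC_psiC {b₀ c : Kq} (h : SameC b₀ c) : eC b₀ (psiC b₀ c) = c := by
  unfold psiC
  rw [dif_pos h]
  exact h.choose_spec.symm

lemma strM_eC (b₀ : Kq) (l : ℤ) (m : ℕ) :
    strM (eC b₀ l) m = (intv l m).map (eC b₀) := by
  unfold strM intv
  rw [Multiset.map_map]
  refine Multiset.map_congr rfl ?_
  intro i _
  show eC b₀ l * qvar ^ (2*(i:ℤ)) = eC b₀ (l + i)
  unfold eC
  rw [eC_mul]

lemma map_msum {α β : Type*} (e : α → β) (S : Multiset (Multiset α)) :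
    S.sum.map e = (S.map (fun s => s.map e)).sum := by
  induction S using Multiset.induction_on with
  | empty => simp
  | cons a s ih => simp [ih]

lemma filter_msum {α : Type*} (p : α → Prop) [DecidablePred p] (S : Multiset (Multiset α)) :
    S.sum.filter p = (S.map (fun s => s.filter p)).sum := by
  induction S using Multiset.induction_on with
  | empty => simp
  | cons a s ih => simp [Multiset.filter_add, ih]

lemma sum_ite_filter {β γ : Type*} [AddCommMonoid γ] (p : β → Prop) [DecidablePred p]
    (g : β → γ) (E : Multiset β) :
    (E.map (fun P => if p P then g P else 0)).sum = ((E.filter p).map g).sum := by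
  induction E using Multiset.induction_on with
  | empty => simp
  | cons a s ih =>
    rw [Multiset.map_cons, Multiset.sum_cons, ih, Multiset.filter_cons]
    split_ifs with h
    · simp
    · simp

lemma strM_filter (b₀ b : Kq) (m : ℕ) :
    (strM b m).filter (SameC b₀) = if SameC b₀ b then strM b m else 0 := by
  split_ifs with h
  · exact Multiset.filter_eq_self.mpr (fun c hc => sameC_trans h (sameC_of_mem_strM hc))
  · exact Multiset.filter_eq_nil.mpr
      (fun c hc hc' => h (sameC_trans hc' (sameC_symm (sameC_of_mem_strM hc))))

lemma strM_filter_not (b₀ b : Kq) (m : ℕ) :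
    (strM b m).filter (fun c => ¬ SameC b₀ c) = if SameC b₀ b then 0 else strM b m := by
  split_ifs with h
  · exact Multiset.filter_eq_nil.mpr
      (fun c hc hc' => hc' (sameC_trans h (sameC_of_mem_strM hc)))
  · exact Multiset.filter_eq_self.mpr
      (fun c hc hc' => h (sameC_trans hc' (sameC_symm (sameC_of_mem_strM hc))))

lemma okK_nonzero {D : Multiset (Kq × ℕ)} {B : Multiset Kq} (h : OkK D B) : 0 ∉ B := by
  intro h0
  obtain ⟨P, hP, hmem⟩ := mem_msum (g := fun P : Kq × ℕ => strM P.1 P.2) (h.2.2 ▸ h0)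
  obtain ⟨i, hi, hval⟩ := mem_strM.mp hmem
  exact (mul_ne_zero (h.1 P hP).1 (zpow_ne_zero _ q_ne_zero)) hval.symm

lemma okK_split {b₀ : Kq} {B : Multiset Kq} {E : Multiset (Kq × ℕ)} (hE : OkK E B) :
    OkK (E.filter (fun P => SameC b₀ P.1)) (B.filter (SameC b₀)) ∧
    OkK (E.filter (fun P => ¬ SameC b₀ P.1)) (B.filter (fun c => ¬ SameC b₀ c)) := by
  obtain ⟨h1, h2, h3⟩ := hE
  constructor
  · refine ⟨fun P hP => h1 P (Multiset.mem_of_mem_filter hP),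
      pw_mono Gd_symm (Multiset.filter_le _ _) h2, ?_⟩
    rw [← h3, filter_msum, Multiset.map_map]
    rw [show ((fun s : Multiset Kq => s.filter (SameC b₀)) ∘ (fun P : Kq × ℕ => strM P.1 P.2))
      = fun P : Kq × ℕ => (strM P.1 P.2).filter (SameC b₀) from rfl]
    rw [Multiset.map_congr (f := fun P : Kq × ℕ => (strM P.1 P.2).filter (SameC b₀))
      (g := fun P : Kq × ℕ => if SameC b₀ P.1 then strM P.1 P.2 else 0) rfl
      (fun P _ => strM_filter b₀ P.1 P.2), sum_ite_filter]
  · refine ⟨fun P hP => h1 P (Multiset.mem_of_mem_filter hP),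
      pw_mono Gd_symm (Multiset.filter_le _ _) h2, ?_⟩
    rw [← h3, filter_msum, Multiset.map_map]
    rw [show ((fun s : Multiset Kq => s.filter (fun c => ¬ SameC b₀ c)) ∘ (fun P : Kq × ℕ => strM P.1 P.2))
      = fun P : Kq × ℕ => (strM P.1 P.2).filter (fun c => ¬ SameC b₀ c) from rfl]
    rw [Multiset.map_congr (f := fun P : Kq × ℕ => (strM P.1 P.2).filter (fun c => ¬ SameC b₀ c))
      (g := fun P : Kq × ℕ => if SameC b₀ P.1 then 0 else strM P.1 P.2) rfl
      (fun P _ => strM_filter_not b₀ P.1 P.2)]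
    rw [show (fun P : Kq × ℕ => if SameC b₀ P.1 then (0 : Multiset Kq) else strM P.1 P.2)
      = fun P : Kq × ℕ => if ¬ SameC b₀ P.1 then strM P.1 P.2 else 0 from ?_]
    · rw [sum_ite_filter]
    · funext P
      split_ifs with h h' <;> tauto

lemma okC_determined {b₀ : Kq} (hb₀0 : b₀ ≠ 0) {C : Multiset Kq} {DC : Multiset (Kq × ℕ)}
    (hmem : ∀ P ∈ DC, SameC b₀ P.1) (hok : OkK DC C) :
    DC = (DC.map (fun P => (psiC b₀ P.1, P.2))).map (fun J : ℤ × ℕ => (eC b₀ J.1, J.2)) ∧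
    OkZ (DC.map (fun P => (psiC b₀ P.1, P.2))) (C.map (psiC b₀)) := by
  obtain ⟨h1, h2, h3⟩ := hok
  have hCclass : ∀ c ∈ C, SameC b₀ c := by
    intro c hc
    obtain ⟨P, hP, hcP⟩ := mem_msum (g := fun P : Kq × ℕ => strM P.1 P.2) (h3 ▸ hc)
    exact sameC_trans (hmem P hP) (sameC_of_mem_strM hcP)
  have hid : ∀ P ∈ DC, (eC b₀ (psiC b₀ P.1), P.2) = P := by
    intro P hP
    have := eC_psiC (hmem P hP)
    rw [this]
  constructor
  · rw [Multiset.map_map]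
    have hcongr : DC.map (fun P : Kq × ℕ => (eC b₀ (psiC b₀ P.1), P.2)) = DC.map id :=
      Multiset.map_congr rfl (fun P hP => hid P hP)
    rw [show ((fun J : ℤ × ℕ => (eC b₀ J.1, J.2)) ∘ (fun P : Kq × ℕ => (psiC b₀ P.1, P.2)))
        = fun P : Kq × ℕ => (eC b₀ (psiC b₀ P.1), P.2) from rfl, hcongr, Multiset.map_id]
  · refine ⟨?_, ?_, ?_⟩
    · intro J hJ
      obtain ⟨P, hP, rfl⟩ := Multiset.mem_map.mp hJ
      exact (h1 P hP).2
    · refine pw_map Gd_symm h2 ?_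
      intro P hP P' hP' hg
      have e1 := eC_psiC (hmem P hP)
      have e2 := eC_psiC (hmem P' hP')
      set l := psiC b₀ P.1 with hl
      set l' := psiC b₀ P'.1 with hl'
      have hrel : P'.1 = P.1 * qvar ^ (2 * (l' - l)) := by
        rw [← e2, ← e1]
        unfold eC
        rw [eC_mul]
        have hexp : l + (l' - l) = l' := by ring
        rw [hexp]
      have hgz := hg.1 _ hrel
      unfold GdZ GoodZ at hgz ⊢
      omega
    · apply Multiset.map_injective (eC_inj hb₀0)
      have h4 : (((DC.map (fun P : Kq × ℕ => (psiC b₀ P.1, P.2))).map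
            (fun J : ℤ × ℕ => intv J.1 J.2)).sum).map (eC b₀)
          = (DC.map fun P => strM P.1 P.2).sum := by
        rw [map_msum, Multiset.map_map, Multiset.map_map]
        refine congrArg Multiset.sum (Multiset.map_congr rfl ?_)
        intro P hP
        show (intv (psiC b₀ P.1) P.2).map (eC b₀) = strM P.1 P.2
        rw [← strM_eC, eC_psiC (hmem P hP)]
      have h5 : (C.map (psiC b₀)).map (eC b₀) = C := by
        rw [Multiset.map_map]
        exact (Multiset.map_congr rfl (fun c hc => eC_psiC (hCclass c hc))).trans
          (Multiset.map_id C)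
      rw [h4, h5, h3]

theorem okK_exists : ∀ (B : Multiset Kq), 0 ∉ B → ∃ D, OkK D B := by
  intro B
  induction B using Multiset.strongInductionOn with
  | _ B ih =>
    intro hB
    rcases eq_or_ne B 0 with rfl | hBne
    · exact ⟨0, by simp [OkK], pw_zero, by simp⟩
    obtain ⟨b₀, hb₀⟩ := Multiset.exists_mem_of_ne_zero hBne
    have hb₀0 : b₀ ≠ 0 := fun h => hB (h ▸ hb₀)
    set C := B.filter (SameC b₀) with hCdef
    set R := B.filter (fun c => ¬ SameC b₀ c) with hRdef
    have hCR : C + R = B := Multiset.filter_add_not _ _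
    have hb₀C : b₀ ∈ C := Multiset.mem_filter.mpr ⟨hb₀, sameC_refl b₀⟩
    have hRlt : R < B := by
      rw [← hCR]
      exact lt_add_of_pos_left _ (Multiset.lt_iff_cons_le.mpr
        ⟨b₀, Multiset.singleton_le.mpr hb₀C⟩)
    obtain ⟨DR, hDR⟩ := ih R hRlt
      (fun h0 => hB (Multiset.mem_of_le (Multiset.filter_le _ _) h0))
    set F := C.map (psiC b₀) with hF
    have hFe : F.map (eC b₀) = C := by
      rw [hF, Multiset.map_map]
      exact (Multiset.map_congr rfl
        (fun c hc => eC_psiC (Multiset.mem_filter.mp hc).2)).trans (Multiset.map_id C)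
    obtain ⟨E, hE1, hE2, hE3⟩ := okZ_exists F
    set DC := E.map (fun J : ℤ × ℕ => (eC b₀ J.1, J.2)) with hDC
    have hDCstr : (DC.map fun P => strM P.1 P.2).sum = C := by
      rw [hDC, Multiset.map_map]
      have : E.map ((fun P : Kq × ℕ => strM P.1 P.2) ∘ (fun J : ℤ × ℕ => (eC b₀ J.1, J.2)))
          = E.map (fun J : ℤ × ℕ => (intv J.1 J.2).map (eC b₀)) :=
        Multiset.map_congr rfl (fun J _ => strM_eC b₀ J.1 J.2)
      have h6 : E.map (fun J : ℤ × ℕ => (intv J.1 J.2).map (eC b₀))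
          = (E.map (fun J : ℤ × ℕ => intv J.1 J.2)).map (fun s => s.map (eC b₀)) :=
        (Multiset.map_map _ _ _).symm
      rw [this, h6, ← map_msum, hE3, hFe]
    refine ⟨DC + DR, ?_, ?_, ?_⟩
    · intro P hP
      rcases Multiset.mem_add.mp hP with hP | hP
      · obtain ⟨J, hJ, rfl⟩ := Multiset.mem_map.mp hP
        exact ⟨eC_ne_zero hb₀0 J.1, hE1 J hJ⟩
      · exact hDR.1 P hP
    · rw [pw_add Gd_symm]
      refine ⟨?_, hDR.2.1, ?_⟩
      · refine pw_map GdZ_symm hE2 ?_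
        intro J hJ J' hJ' hgood
        constructor
        · intro k hk
          have hk' : eC b₀ J'.1 = eC b₀ J.1 * qvar ^ (2*k) := hk
          have hkey : eC b₀ J'.1 = eC b₀ (J.1 + k) := by
            rw [hk']
            show eC b₀ J.1 * qvar ^ (2*k) = eC b₀ (J.1 + k)
            unfold eC
            rw [eC_mul]
          have heq := eC_inj hb₀0 hkey
          show GoodZ 0 J.2 k J'.2
          unfold GdZ at hgood
          unfold GoodZ at hgood ⊢
          omega
        · intro k hk
          have hk' : eC b₀ J.1 = eC b₀ J'.1 * qvar ^ (2*k) := hk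
          have hkey : eC b₀ J.1 = eC b₀ (J'.1 + k) := by
            rw [hk']
            show eC b₀ J'.1 * qvar ^ (2*k) = eC b₀ (J'.1 + k)
            unfold eC
            rw [eC_mul]
          have heq := eC_inj hb₀0 hkey
          show GoodZ 0 J'.2 k J.2
          unfold GdZ at hgood
          unfold GoodZ at hgood ⊢
          omega
      · intro P hP P' hP'
        obtain ⟨J, hJ, rfl⟩ := Multiset.mem_map.mp hP
        have hm' : 1 ≤ P'.2 := (hDR.1 P' hP').2
        have hbotR : P'.1 ∈ R := Multiset.mem_of_le (hDR.2.2 ▸ le_msum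
          (g := fun P : Kq × ℕ => strM P.1 P.2) hP') (bot_mem_strM hm')
        have hnotC : ¬ SameC b₀ P'.1 := (Multiset.mem_filter.mp hbotR).2
        constructor
        · intro k hk
          have hk' : P'.1 = eC b₀ J.1 * qvar ^ (2*k) := hk
          have hsc : SameC b₀ P'.1 := by
            refine ⟨J.1 + k, ?_⟩
            rw [hk']
            show eC b₀ J.1 * qvar ^ (2*k) = b₀ * qvar ^ (2*(J.1+k))
            unfold eC
            rw [eC_mul]
          exact absurd hsc hnotC
        · intro k hk
          have hk' : eC b₀ J.1 = P'.1 * qvar ^ (2*k) := hk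
          have h2 : P'.1 = eC b₀ J.1 * (qvar ^ (2*k))⁻¹ := by
            rw [hk', mul_assoc, mul_inv_cancel₀ (zpow_ne_zero _ q_ne_zero), mul_one]
          refine absurd ⟨J.1 - k, ?_⟩ hnotC
          rw [h2]
          unfold eC
          rw [← zpow_neg, mul_assoc, ← zpow_add₀ q_ne_zero]
          congr 1
          ring
    · rw [Multiset.map_add, Multiset.sum_add, hDCstr, hDR.2.2, hCR]

theorem okK_unique : ∀ (B : Multiset Kq) {D D' : Multiset (Kq × ℕ)},
    OkK D B → OkK D' B → D = D' := by
  intro B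
  induction B using Multiset.strongInductionOn with
  | _ B ih =>
    intro D D' hD hD'
    rcases eq_or_ne B 0 with rfl | hBne
    · have hz : ∀ {E : Multiset (Kq × ℕ)}, OkK E 0 → E = 0 := by
        intro E hE
        by_contra hne
        obtain ⟨P, hP⟩ := Multiset.exists_mem_of_ne_zero hne
        have hle : strM P.1 P.2 ≤ 0 := hE.2.2 ▸ le_msum (g := fun P : Kq × ℕ => strM P.1 P.2) hP
        have hmm : P.1 ∈ (0 : Multiset Kq) :=
          Multiset.mem_of_le hle (bot_mem_strM (hE.1 P hP).2)
        simp at hmm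
      rw [hz hD, hz hD']
    obtain ⟨b₀, hb₀⟩ := Multiset.exists_mem_of_ne_zero hBne
    have hb₀0 : b₀ ≠ 0 := fun h => okK_nonzero hD (h ▸ hb₀)
    have hb₀C : b₀ ∈ B.filter (SameC b₀) := Multiset.mem_filter.mpr ⟨hb₀, sameC_refl b₀⟩
    have hRlt : B.filter (fun c => ¬ SameC b₀ c) < B := by
      conv_rhs => rw [← Multiset.filter_add_not (SameC b₀) B]
      exact lt_add_of_pos_left _ (Multiset.lt_iff_cons_le.mpr
        ⟨b₀, Multiset.singleton_le.mpr hb₀C⟩)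
    obtain ⟨hDC, hDR⟩ := okK_split (b₀ := b₀) hD
    obtain ⟨hDC', hDR'⟩ := okK_split (b₀ := b₀) hD'
    have hReq : D.filter (fun P => ¬ SameC b₀ P.1) = D'.filter (fun P => ¬ SameC b₀ P.1) :=
      ih _ hRlt hDR hDR'
    have hmemD : ∀ P ∈ D.filter (fun P : Kq × ℕ => SameC b₀ P.1), SameC b₀ P.1 :=
      fun P hP => (Multiset.mem_filter.mp hP).2
    have hmemD' : ∀ P ∈ D'.filter (fun P : Kq × ℕ => SameC b₀ P.1), SameC b₀ P.1 :=
      fun P hP => (Multiset.mem_filter.mp hP).2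
    obtain ⟨hid1, hok1⟩ := okC_determined hb₀0 hmemD hDC
    obtain ⟨hid2, hok2⟩ := okC_determined hb₀0 hmemD' hDC'
    have hZeq := okZ_unique hok1 hok2
    have hCeq : D.filter (fun P : Kq × ℕ => SameC b₀ P.1)
        = D'.filter (fun P : Kq × ℕ => SameC b₀ P.1) := by
      rw [hid1, hid2, hZeq]
    calc D = D.filter (fun P : Kq × ℕ => SameC b₀ P.1)
          + D.filter (fun P : Kq × ℕ => ¬ SameC b₀ P.1) := (Multiset.filter_add_not _ _).symm
      _ = D'.filter (fun P : Kq × ℕ => SameC b₀ P.1)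
          + D'.filter (fun P : Kq × ℕ => ¬ SameC b₀ P.1) := by rw [hCeq, hReq]
      _ = D' := Multiset.filter_add_not _ _

/-! ### Permutation to equivalence -/

lemma coe_ofFn_eq {α : Type*} {n : ℕ} (v : Fin n → α) :
    (↑(List.ofFn v) : Multiset α) = Multiset.map v Finset.univ.val := by
  rw [List.ofFn_eq_map]
  rfl

lemma perm_equiv {α : Type*} : ∀ {s s' : ℕ} (v : Fin s → α) (v' : Fin s' → α),
    (List.ofFn v).Perm (List.ofFn v') → ∃ σ : Fin s ≃ Fin s', ∀ j, v j = v' (σ j) := by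
  intro s
  induction s with
  | zero =>
    intro s' v v' h
    have hl := h.length_eq
    simp only [List.length_ofFn] at hl
    have hs' : s' = 0 := by omega
    subst hs'
    exact ⟨Equiv.refl _, fun j => j.elim0⟩
  | succ n ihn =>
    intro s' v v' h
    have hmem : v 0 ∈ List.ofFn v' := h.mem_iff.mp (by
      rw [List.ofFn_succ]; exact List.mem_cons_self)
    obtain ⟨i, hi⟩ := List.mem_ofFn.mp hmem
    cases s' with
    | zero => exact absurd hmem (by simp)
    | succ n' =>
      have hsplit : (List.ofFn v').Perm (v' i :: List.ofFn (v' ∘ i.succAbove)) := by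
        rw [← Multiset.coe_eq_coe, coe_ofFn_eq, Fin.univ_succAbove n' i]
        rw [show ((v' i :: List.ofFn (v' ∘ i.succAbove) : List α) : Multiset α)
          = v' i ::ₘ ↑(List.ofFn (v' ∘ i.succAbove)) from rfl, coe_ofFn_eq]
        rw [Finset.cons_val, Multiset.map_cons, Finset.map_val, Multiset.map_map]
        rfl
      have h1 : (v 0 :: List.ofFn (v ∘ Fin.succ)).Perm (v' i :: List.ofFn (v' ∘ i.succAbove)) := by
        have h2 : List.ofFn v = v 0 :: List.ofFn (v ∘ Fin.succ) := List.ofFn_succ (f := v)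
        rw [← h2]
        exact h.trans hsplit
      rw [← hi] at h1
      have htail := h1.cons_inv
      obtain ⟨σ', hσ'⟩ := ihn _ _ htail
      refine ⟨(finSuccEquiv' (0 : Fin (n+1))).trans ((Equiv.optionCongr σ').trans
        (finSuccEquiv' i).symm), ?_⟩
      intro j
      refine Fin.cases ?_ ?_ j
      · have h0 : (finSuccEquiv' (0 : Fin (n+1))) 0 = none := finSuccEquiv'_at 0
        simp only [Equiv.trans_apply, h0, Equiv.optionCongr_apply, Option.map_none,
          finSuccEquiv'_symm_none]
        exact hi.symm
      · intro k
        have h0 : (finSuccEquiv' (0 : Fin (n+1))) k.succ = some k := by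
          rw [← Fin.succAbove_zero, finSuccEquiv'_succAbove]
        simp only [Equiv.trans_apply, h0, Equiv.optionCongr_apply, Option.map_some,
          finSuccEquiv'_symm_some]
        exact hσ' k

/-! ### Polynomial layer -/

def PB (B : Multiset Kq) : Polynomial Kq := (B.map (fun b => 1 - C b * X)).prod

lemma PB_eval_zero (B : Multiset Kq) : (PB B).eval 0 = 1 := by
  unfold PB
  rw [Polynomial.eval_multiset_prod, Multiset.map_map]
  have hc : B.map ((Polynomial.eval 0) ∘ (fun b => 1 - C b * X)) = B.map (fun _ => (1:Kq)) :=
    Multiset.map_congr rfl (fun b _ => by simp)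
  rw [hc, Multiset.map_const', Multiset.prod_replicate, one_pow]

lemma factor_eq {b : Kq} (hb : b ≠ 0) :
    (1 : Polynomial Kq) - C b * X = C (-b) * (X - C b⁻¹) := by
  rw [mul_sub, ← C_mul]
  have h1 : (-b) * b⁻¹ = -1 := by rw [neg_mul, mul_inv_cancel₀ hb]
  rw [h1]
  simp only [map_neg, map_one]
  ring

lemma factor_eq' {r : Kq} (hr : r ≠ 0) :
    (X : Polynomial Kq) - C r = C (-r) * (1 - C r⁻¹ * X) := by
  rw [mul_sub, mul_one, ← mul_assoc, ← C_mul]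
  have h1 : (-r) * r⁻¹ = -1 := by rw [neg_mul, mul_inv_cancel₀ hr]
  rw [h1]
  simp only [map_neg, map_one]
  ring

lemma PB_factored {B : Multiset Kq} (hB : 0 ∉ B) :
    PB B = C ((B.map (fun b => -b)).prod) *
      ((B.map (fun b => b⁻¹)).map (fun r => X - C r)).prod := by
  unfold PB
  have hcong : B.map (fun b => (1 : Polynomial Kq) - C b * X)
      = B.map (fun b => C (-b) * (X - C b⁻¹)) :=
    Multiset.map_congr rfl (fun b hb => factor_eq (fun h => hB (h ▸ hb)))
  rw [hcong, Multiset.prod_map_mul]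
  congr 1
  · rw [map_multiset_prod (C : Kq →+* Polynomial Kq), Multiset.map_map]
    rfl
  · rw [Multiset.map_map]
    rfl

lemma PB_roots {B : Multiset Kq} (hB : 0 ∉ B) : (PB B).roots = B.map (fun b => b⁻¹) := by
  rw [PB_factored hB, Polynomial.roots_C_mul, Polynomial.roots_multiset_prod_X_sub_C]
  refine Multiset.prod_ne_zero ?_
  intro h
  obtain ⟨b, hb, hb0⟩ := Multiset.mem_map.mp h
  exact hB (neg_eq_zero.mp hb0 ▸ hb)

lemma PB_inj {B B' : Multiset Kq} (hB : 0 ∉ B) (hB' : 0 ∉ B') (h : PB B = PB B') : B = B' := by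
  have e1 : ∀ (S : Multiset Kq), (S.map (fun b => b⁻¹)).map (fun b => b⁻¹) = S := by
    intro S
    rw [Multiset.map_map]
    exact (Multiset.map_congr rfl (fun c _ => inv_inv c)).trans (Multiset.map_id S)
  have h3 : B.map (fun b : Kq => b⁻¹) = B'.map (fun b : Kq => b⁻¹) := by
    rw [← PB_roots hB, h, PB_roots hB']
  rw [← e1 B, ← e1 B', h3]

lemma exists_B (π : Polynomial Kq) (h0 : π.coeff 0 = 1) (hsplit : π.Splits) :
    ∃ B : Multiset Kq, 0 ∉ B ∧ π = PB B := by
  have hroots0 : (0:Kq) ∉ π.roots := by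
    intro h
    have h2 := (Polynomial.mem_roots'.mp h).2
    rw [Polynomial.IsRoot, ← Polynomial.coeff_zero_eq_eval_zero, h0] at h2
    exact one_ne_zero h2
  set B := π.roots.map (fun r => r⁻¹) with hBdef
  have hB0 : (0:Kq) ∉ B := by
    intro h
    obtain ⟨r, hr, hr0⟩ := Multiset.mem_map.mp h
    rw [inv_eq_zero] at hr0
    exact hroots0 (hr0 ▸ hr)
  have hfac := hsplit.eq_prod_roots
  have hstep : (π.roots.map (fun a => X - C a)).prod
      = C ((π.roots.map (fun r => -r)).prod) * PB B := by
    have hcong : π.roots.map (fun a => (X : Polynomial Kq) - C a)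
        = π.roots.map (fun r => C (-r) * (1 - C r⁻¹ * X)) :=
      Multiset.map_congr rfl (fun r hr => factor_eq' (fun h => hroots0 (h ▸ hr)))
    rw [hcong, Multiset.prod_map_mul]
    congr 1
    · rw [map_multiset_prod (C : Kq →+* Polynomial Kq), Multiset.map_map]
      rfl
    · unfold PB
      rw [hBdef, Multiset.map_map]
      rfl
  refine ⟨B, hB0, ?_⟩
  have hπ : π = C (π.leadingCoeff * (π.roots.map (fun r => -r)).prod) * PB B := by
    calc π = C π.leadingCoeff * (π.roots.map (fun a => X - C a)).prod := hfac
      _ = C π.leadingCoeff * (C ((π.roots.map (fun r => -r)).prod) * PB B) := by rw [hstep]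
      _ = C (π.leadingCoeff * (π.roots.map (fun r => -r)).prod) * PB B := by
          rw [map_mul, mul_assoc]
  have heval := congrArg (Polynomial.eval 0) hπ
  rw [← Polynomial.coeff_zero_eq_eval_zero, h0, Polynomial.eval_mul, Polynomial.eval_C,
    PB_eval_zero, mul_one] at heval
  rw [hπ, ← heval, map_one, one_mul]

/-! ### qstring connection -/

lemma qstring_eq_PB (a : Kq) (m : ℕ) :
    qstring a m = PB (strM (a * qvar ^ (1 - (m:ℤ))) m) := by
  unfold qstring PB strM
  rw [Multiset.map_map]
  rw [show Multiset.range m = (Finset.range m).val from rfl, ← Finset.prod_eq_multiset_prod]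
  refine Finset.prod_bij' (fun r _ => m - r) (fun i _ => m - i) ?_ ?_ ?_ ?_ ?_
  · intro r hr
    rw [Finset.mem_Icc] at hr
    rw [Finset.mem_range]
    show m - r < m
    omega
  · intro i hi
    rw [Finset.mem_range] at hi
    rw [Finset.mem_Icc]
    show 1 ≤ m - i ∧ m - i ≤ m
    omega
  · intro r hr
    rw [Finset.mem_Icc] at hr
    show m - (m - r) = r
    omega
  · intro i hi
    rw [Finset.mem_range] at hi
    show m - (m - i) = i
    omega
  · intro r hr
    rw [Finset.mem_Icc] at hr
    show (1 : Polynomial Kq) - C (a * qvar ^ ((m:ℤ) - 2*(r:ℤ) + 1)) * X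
      = 1 - C (a * qvar ^ (1 - (m:ℤ)) * qvar ^ (2*(((m - r : ℕ)):ℤ))) * X
    rw [mul_assoc, ← zpow_add₀ q_ne_zero]
    have hcast : (((m - r : ℕ)):ℤ) = (m:ℤ) - (r:ℤ) := by omega
    rw [hcast]
    have hexp : (1 - (m:ℤ)) + 2*((m:ℤ) - (r:ℤ)) = (m:ℤ) - 2*(r:ℤ) + 1 := by ring
    rw [hexp]

lemma PB_msum (S : Multiset (Multiset Kq)) : PB S.sum = (S.map PB).prod := by
  induction S using Multiset.induction_on with
  | empty => simp [PB]
  | cons a s ih =>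
    rw [Multiset.sum_cons, Multiset.map_cons, Multiset.prod_cons, ← ih]
    unfold PB
    rw [Multiset.map_add, Multiset.prod_add]

/-! ### Representation lemmas -/

lemma shift_eq {u v : Kq} {e f : ℤ} (h : u * qvar ^ e = v * qvar ^ f) :
    u = v * qvar ^ (f - e) := by
  have hq : (qvar:Kq) ^ e ≠ 0 := zpow_ne_zero _ q_ne_zero
  apply mul_right_cancel₀ hq
  rw [h, mul_assoc, ← zpow_add₀ q_ne_zero]
  congr 1
  ring

lemma div_of_eq {u v : Kq} (hu : u ≠ 0) {E : ℤ} (h : v = u * qvar ^ E) :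
    v / u = qvar ^ E := by
  rw [h, mul_comm, mul_div_assoc, div_self hu, mul_one]

def botFn {s : ℕ} (m : Fin s → ℕ) (a : Fin s → Kq) : Fin s → Kq × ℕ :=
  fun j => (a j * qvar ^ (1 - (m j : ℤ)), m j)

lemma rep_prod {s : ℕ} (m : Fin s → ℕ) (a : Fin s → Kq) :
    (∏ j, qstring (a j) (m j))
      = PB (((↑(List.ofFn (botFn m a)) : Multiset (Kq × ℕ)).map
          (fun P => strM P.1 P.2)).sum) := by
  rw [PB_msum, Multiset.map_coe, Multiset.map_coe, Multiset.prod_coe,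
    List.map_ofFn, List.map_ofFn, List.prod_ofFn]
  refine Finset.prod_congr rfl ?_
  intro j _
  show qstring (a j) (m j) = PB (strM (a j * qvar ^ (1 - (m j : ℤ))) (m j))
  exact qstring_eq_PB (a j) (m j)

lemma rep_ok {s : ℕ} {m : Fin s → ℕ} {a : Fin s → Kq} (hNF : NormalForm s m a) :
    OkK (↑(List.ofFn (botFn m a)))
      (((↑(List.ofFn (botFn m a)) : Multiset (Kq × ℕ)).map (fun P => strM P.1 P.2)).sum) := by
  obtain ⟨h1, h2, h3⟩ := hNF
  refine ⟨?_, ?_, rfl⟩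
  · intro P hP
    rw [Multiset.mem_coe] at hP
    obtain ⟨j, hj⟩ := List.mem_ofFn.mp hP
    rw [← hj]
    exact ⟨mul_ne_zero (h2 j) (zpow_ne_zero _ q_ne_zero), h1 j⟩
  · refine ⟨List.ofFn (botFn m a), rfl, ?_⟩
    rw [List.pairwise_ofFn]
    intro i j hij
    have hNFij := h3 i j hij
    constructor
    · intro k hk
      by_contra hg
      obtain ⟨p, hp, hcase⟩ := (not_goodZ_iff (h1 i) (h1 j) k).mp hg
      have hk' : a j * qvar ^ (1 - (m j:ℤ)) = (a i * qvar ^ (1 - (m i:ℤ))) * qvar ^ (2*k) := hk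
      have hk2 : a i * qvar ^ ((1 - (m i:ℤ)) + 2*k) = a j * qvar ^ (1 - (m j:ℤ)) := by
        rw [hk', mul_assoc, ← zpow_add₀ q_ne_zero]
      have h5 : a i = a j * qvar ^ ((1 - (m j:ℤ)) - ((1 - (m i:ℤ)) + 2*k)) := shift_eq hk2
      have hdiv : a i / a j = qvar ^ ((1 - (m j:ℤ)) - ((1 - (m i:ℤ)) + 2*k)) :=
        div_of_eq (h2 j) h5
      rcases hcase with hc | hc
      · refine (hNFij p hp).1 ?_
        rw [hdiv]
        congr 1
        omega
      · refine (hNFij p hp).2 ?_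
        rw [hdiv]
        congr 1
        omega
    · intro k hk
      by_contra hg
      obtain ⟨p, hp, hcase⟩ := (not_goodZ_iff (h1 j) (h1 i) k).mp hg
      have hk' : a i * qvar ^ (1 - (m i:ℤ)) = (a j * qvar ^ (1 - (m j:ℤ))) * qvar ^ (2*k) := hk
      have hk2 : a i * qvar ^ (1 - (m i:ℤ)) = a j * qvar ^ ((1 - (m j:ℤ)) + 2*k) := by
        rw [hk', mul_assoc, ← zpow_add₀ q_ne_zero]
      have h5 : a i = a j * qvar ^ (((1 - (m j:ℤ)) + 2*k) - (1 - (m i:ℤ))) := shift_eq hk2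
      have hdiv : a i / a j = qvar ^ (((1 - (m j:ℤ)) + 2*k) - (1 - (m i:ℤ))) :=
        div_of_eq (h2 j) h5
      rcases hcase with hc | hc
      · refine (hNFij p (by omega)).2 ?_
        rw [hdiv]
        congr 1
        omega
      · refine (hNFij p (by omega)).1 ?_
        rw [hdiv]
        congr 1
        omega

end Stmt4Aux

open Stmt4Aux

theorem stmt_4 (π : Polynomial Kq) (h0 : π.coeff 0 = 1)
    (hsplit : π.Splits) :
    (∃ (s : ℕ) (m : Fin s → ℕ) (a : Fin s → Kq), NormalForm s m a ∧
      π = ∏ j, qstring (a j) (m j)) ∧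
    (∀ (s : ℕ) (m : Fin s → ℕ) (a : Fin s → Kq) (s' : ℕ) (m' : Fin s' → ℕ) (a' : Fin s' → Kq),
      NormalForm s m a → NormalForm s' m' a' →
      π = ∏ j, qstring (a j) (m j) → π = ∏ j, qstring (a' j) (m' j) →
      ∃ σ : Fin s ≃ Fin s', ∀ j, m j = m' (σ j) ∧ a j = a' (σ j)) := by
  constructor
  · -- existence
    obtain ⟨B, hB0, hπB⟩ := exists_B π h0 hsplit
    obtain ⟨D, hD⟩ := okK_exists B hB0
    set L := D.toList with hLdef
    have hmemL : ∀ j : Fin L.length, L.get j ∈ D := by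
      intro j
      have : L.get j ∈ L := List.get_mem L j
      rwa [← Multiset.mem_coe, Multiset.coe_toList] at this
    refine ⟨L.length, fun j => (L.get j).2,
      fun j => (L.get j).1 * qvar ^ (((L.get j).2:ℤ) - 1), ⟨?_, ?_, ?_⟩, ?_⟩
    · exact fun j => (hD.1 _ (hmemL j)).2
    · exact fun j => mul_ne_zero (hD.1 _ (hmemL j)).1 (zpow_ne_zero _ q_ne_zero)
    · intro i j hij p hp
      have hpwL : L.Pairwise Gd := by
        obtain ⟨L', hL', hpw'⟩ := hD.2.1
        have hperm : L.Perm L' := by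
          rw [← Multiset.coe_eq_coe, Multiset.coe_toList, hL']
        exact (hperm.pairwise_iff (fun h => Gd_symm h)).mpr hpw'
      have hGd : Gd (L.get i) (L.get j) := List.pairwise_iff_get.mp hpwL i j hij
      have hbi0 : (L.get i).1 ≠ 0 := (hD.1 _ (hmemL i)).1
      have hbj0 : (L.get j).1 ≠ 0 := (hD.1 _ (hmemL j)).1
      have haj0 : (L.get j).1 * qvar ^ (((L.get j).2:ℤ) - 1) ≠ 0 :=
        mul_ne_zero hbj0 (zpow_ne_zero _ q_ne_zero)
      constructor
      · intro heq
        have h1 : (L.get i).1 * qvar ^ (((L.get i).2:ℤ) - 1)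
            = qvar ^ (((L.get i).2:ℤ) + ((L.get j).2:ℤ) - 2*p)
              * ((L.get j).1 * qvar ^ (((L.get j).2:ℤ) - 1)) := (div_eq_iff haj0).mp heq
        have h2 : (L.get i).1 * qvar ^ (((L.get i).2:ℤ) - 1)
            = (L.get j).1 * qvar ^ ((((L.get j).2:ℤ) - 1)
              + (((L.get i).2:ℤ) + ((L.get j).2:ℤ) - 2*p)) := by
          rw [h1, mul_comm, mul_assoc, ← zpow_add₀ q_ne_zero]
        have h3 := shift_eq h2
        have h4 : ((((L.get j).2:ℤ) - 1) + (((L.get i).2:ℤ) + ((L.get j).2:ℤ) - 2*p))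
            - (((L.get i).2:ℤ) - 1) = 2 * (((L.get j).2:ℤ) - p) := by ring
        rw [h4] at h3
        have hgz := hGd.2 (((L.get j).2:ℤ) - p) h3
        have hp' : p < min (L.get i).2 (L.get j).2 := hp
        unfold GoodZ at hgz
        omega
      · intro heq
        have h1 : (L.get i).1 * qvar ^ (((L.get i).2:ℤ) - 1)
            = qvar ^ (-(((L.get i).2:ℤ) + ((L.get j).2:ℤ) - 2*p))
              * ((L.get j).1 * qvar ^ (((L.get j).2:ℤ) - 1)) := (div_eq_iff haj0).mp heq
        have h2 : (L.get i).1 * qvar ^ (((L.get i).2:ℤ) - 1)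
            = (L.get j).1 * qvar ^ ((((L.get j).2:ℤ) - 1)
              + (-(((L.get i).2:ℤ) + ((L.get j).2:ℤ) - 2*p))) := by
          rw [h1, mul_comm, mul_assoc, ← zpow_add₀ q_ne_zero]
        have h3 := shift_eq h2
        have h4 : ((((L.get j).2:ℤ) - 1) + (-(((L.get i).2:ℤ) + ((L.get j).2:ℤ) - 2*p)))
            - (((L.get i).2:ℤ) - 1) = 2 * ((p:ℤ) - (L.get i).2) := by ring
        rw [h4] at h3
        have hgz := hGd.2 ((p:ℤ) - (L.get i).2) h3
        have hp' : p < min (L.get i).2 (L.get j).2 := hp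
        unfold GoodZ at hgz
        omega
    · rw [hπB, rep_prod]
      have hfn : botFn (fun j => (L.get j).2)
          (fun j => (L.get j).1 * qvar ^ (((L.get j).2:ℤ) - 1)) = L.get := by
        funext j
        unfold botFn
        have hfst : ((L.get j).1 * qvar ^ (((L.get j).2:ℤ) - 1))
            * qvar ^ (1 - ((L.get j).2:ℤ)) = (L.get j).1 := by
          rw [mul_assoc, ← zpow_add₀ q_ne_zero]
          have : (((L.get j).2:ℤ) - 1) + (1 - ((L.get j).2:ℤ)) = 0 := by ring
          rw [this, zpow_zero, mul_one]
        calc ((L.get j).1 * qvar ^ (((L.get j).2:ℤ) - 1) * qvar ^ (1 - (((L.get j).2:ℕ):ℤ)),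
              (L.get j).2)
            = ((L.get j).1, (L.get j).2) := by rw [hfst]
          _ = L.get j := rfl
      rw [hfn, List.ofFn_get, Multiset.coe_toList, hD.2.2]
  · -- uniqueness
    intro s m a s' m' a' hNF hNF' hprod hprod'
    have hok := rep_ok hNF
    have hok' := rep_ok hNF'
    have hPBeq : PB (((↑(List.ofFn (botFn m a)) : Multiset (Kq × ℕ)).map
          (fun P => strM P.1 P.2)).sum)
        = PB (((↑(List.ofFn (botFn m' a')) : Multiset (Kq × ℕ)).map
          (fun P => strM P.1 P.2)).sum) := by
      rw [← rep_prod, ← rep_prod, ← hprod, ← hprod']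
    have hBeq := PB_inj (okK_nonzero hok) (okK_nonzero hok') hPBeq
    have hDeq : (↑(List.ofFn (botFn m a)) : Multiset (Kq × ℕ))
        = ↑(List.ofFn (botFn m' a')) :=
      okK_unique _ hok (hBeq ▸ hok')
    have hperm := Multiset.coe_eq_coe.mp hDeq
    obtain ⟨σ, hσ⟩ := perm_equiv _ _ hperm
    refine ⟨σ, ?_⟩
    intro j
    have h := hσ j
    have hm : m j = m' (σ j) := congrArg Prod.snd h
    have hb : a j * qvar ^ (1 - (m j:ℤ)) = a' (σ j) * qvar ^ (1 - (m' (σ j):ℤ)) :=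
      congrArg Prod.fst h
    refine ⟨hm, ?_⟩
    rw [hm] at hb
    exact mul_right_cancel₀ (zpow_ne_zero _ q_ne_zero) hb
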